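/- For fixed r > 0 and a ≠ 0, the double-integral beamforming-gain approximation (1/(N₁N₂))·|∫_{-N₁/2}^{N₁/2} ∫_{-N₂/2}^{N₂/2} e^{i a n₁ n₂} dn₁ dn₂| equals |Si(η)/η| with η = a N₁ N₂ / 4, where Si(x) = ∫_0^x (sin t)/t dt. -/

import Mathlib

open Real Filter Complex

/-- The sine integral `Si x = ∫_0^x (sin t)/t dt`. -/
noncomputable def Si (x : ℝ) : ℝ := ∫ t in (0:ℝ)..x, Real.sin t / t

open MeasureTheory in
noncomputable def mySinc (x : ℝ) : ℝ := if x = 0 then 1 else Real.sin x / x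

lemma mySinc_neg (x : ℝ) : mySinc (-x) = mySinc x := by
  unfold mySinc
  rcases eq_or_ne x 0 with rfl | hx
  · simp
  · rw [if_neg (neg_ne_zero.mpr hx), if_neg hx, Real.sin_neg, neg_div_neg_eq]

open MeasureTheory in
lemma mySinc_intervalIntegrable (a b : ℝ) : IntervalIntegrable mySinc volume a b := by
  rw [intervalIntegrable_iff]
  apply Measure.integrableOn_of_bounded (M := 1)
  · rw [Set.uIoc]
    exact measure_Ioc_lt_top.ne
  · have hm : Measurable mySinc := by
      unfold mySinc
      exact Measurable.ite (measurableSet_eq) measurable_const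
        (Real.measurable_sin.div measurable_id)
    exact hm.aestronglyMeasurable
  · filter_upwards with x
    unfold mySinc
    rcases eq_or_ne x 0 with rfl | hx
    · simp
    · rw [if_neg hx, Real.norm_eq_abs, abs_div, div_le_one (abs_pos.mpr hx)]
      exact Real.abs_sin_le_abs

open MeasureTheory in
lemma integral_mySinc_zero (η : ℝ) : ∫ x in (0:ℝ)..η, mySinc x = Si η := by
  apply intervalIntegral.integral_congr_ae
  have h0 : ∀ᵐ (x : ℝ), x ≠ 0 := by
    rw [ae_iff]
    simp only [not_not, Set.setOf_eq_eq_singleton]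
    exact Real.volume_singleton
  filter_upwards [h0] with x hx _
  unfold mySinc
  rw [if_neg hx]

lemma integral_mySinc_symm (η : ℝ) : ∫ x in (-η)..η, mySinc x = 2 * Si η := by
  have h1 : ∫ x in (-η)..(0:ℝ), mySinc x = Si η := by
    have := intervalIntegral.integral_comp_neg (a := (0:ℝ)) (b := η) (fun x => mySinc x)
    simp only [mySinc_neg, neg_zero] at this
    rw [← this, integral_mySinc_zero]
  rw [← intervalIntegral.integral_add_adjacent_intervals
      (mySinc_intervalIntegrable (-η) 0) (mySinc_intervalIntegrable 0 η),
    h1, integral_mySinc_zero, two_mul]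

lemma inner_integral_eq (a N₂ : ℝ) (ha : a ≠ 0) (hN₂ : N₂ ≠ 0) (n₁ : ℝ) :
    (∫ n₂ in (-(N₂/2))..(N₂/2), Complex.exp (Complex.I * ((a * n₁ * n₂ : ℝ) : ℂ)))
      = ((N₂ * mySinc (a * N₂ / 2 * n₁) : ℝ) : ℂ) := by
  rcases eq_or_ne n₁ 0 with rfl | hn₁
  · simp [mySinc]
  · have hc : (Complex.I * ((a : ℂ) * (n₁ : ℂ))) ≠ 0 := by
      simp [Complex.I_ne_zero, ha, hn₁]
    have key : (∫ n₂ in (-(N₂/2))..(N₂/2),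
        Complex.exp ((Complex.I * ((a : ℂ) * (n₁ : ℂ))) * (n₂ : ℂ)))
        = (Complex.exp ((Complex.I * ((a : ℂ) * (n₁ : ℂ))) * ((N₂/2 : ℝ) : ℂ))
          - Complex.exp ((Complex.I * ((a : ℂ) * (n₁ : ℂ))) * ((-(N₂/2) : ℝ) : ℂ)))
          / (Complex.I * ((a : ℂ) * (n₁ : ℂ))) :=
      integral_exp_mul_complex hc
    have congr1 : (∫ n₂ in (-(N₂/2))..(N₂/2), Complex.exp (Complex.I * ((a * n₁ * n₂ : ℝ) : ℂ)))
        = ∫ n₂ in (-(N₂/2))..(N₂/2),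
            Complex.exp ((Complex.I * ((a : ℂ) * (n₁ : ℂ))) * (n₂ : ℂ)) := by
      apply intervalIntegral.integral_congr
      intro x _
      norm_num
      ring_nf
    have h1 : (Complex.I * ((a : ℂ) * (n₁ : ℂ))) * ((N₂/2 : ℝ) : ℂ)
        = ((a * n₁ * (N₂/2) : ℝ) : ℂ) * Complex.I := by push_cast; ring
    have h2 : (Complex.I * ((a : ℂ) * (n₁ : ℂ))) * ((-(N₂/2) : ℝ) : ℂ)
        = ((-(a * n₁ * (N₂/2)) : ℝ) : ℂ) * Complex.I := by push_cast; ring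
    rw [congr1, key, h1, h2, Complex.exp_mul_I, Complex.exp_mul_I]
    have hθ' : a * N₂ / 2 * n₁ ≠ 0 :=
      mul_ne_zero (div_ne_zero (mul_ne_zero ha hN₂) two_ne_zero) hn₁
    have hθeq : a * N₂ / 2 * n₁ = a * n₁ * (N₂ / 2) := by ring
    rw [show mySinc (a * N₂ / 2 * n₁)
        = Real.sin (a * n₁ * (N₂/2)) / (a * n₁ * (N₂/2)) by
      rw [← hθeq]; unfold mySinc; rw [if_neg hθ']]
    have hθc : ((a * n₁ * (N₂/2) : ℝ) : ℂ) ≠ 0 :=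
      Complex.ofReal_ne_zero.mpr (hθeq ▸ hθ')
    have hrel : ((a * n₁ * (N₂/2) : ℝ) : ℂ) * 2 = (a : ℂ) * (n₁ : ℂ) * (N₂ : ℂ) := by
      push_cast; ring
    have hA : (a : ℂ) ≠ 0 := Complex.ofReal_ne_zero.mpr ha
    have hB : (n₁ : ℂ) ≠ 0 := Complex.ofReal_ne_zero.mpr hn₁
    have hC : (N₂ : ℂ) ≠ 0 := Complex.ofReal_ne_zero.mpr hN₂
    have hθc' : (a : ℂ) * (n₁ : ℂ) * (N₂ : ℂ) / 2 ≠ 0 :=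
      div_ne_zero (mul_ne_zero (mul_ne_zero hA hB) hC) two_ne_zero
    push_cast [Complex.cos_neg, Complex.sin_neg]
    field_simp
    ring

theorem UPA_bilinear_gain_eq_Si (a N₁ N₂ : ℝ) (ha : a ≠ 0) (hN₁ : 0 < N₁) (hN₂ : 0 < N₂) :
    (1 / (N₁ * N₂)) *
      ‖(∫ n₁ in (-(N₁/2))..(N₁/2), ∫ n₂ in (-(N₂/2))..(N₂/2),
        Complex.exp (Complex.I * ((a * n₁ * n₂ : ℝ) : ℂ)))‖ =
    |Si (a * N₁ * N₂ / 4) / (a * N₁ * N₂ / 4)| := by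
  have hN₂' : N₂ ≠ 0 := ne_of_gt hN₂
  have hk : a * N₂ / 2 ≠ 0 := div_ne_zero (mul_ne_zero ha hN₂') two_ne_zero
  have step1 : (∫ n₁ in (-(N₁/2))..(N₁/2), ∫ n₂ in (-(N₂/2))..(N₂/2),
      Complex.exp (Complex.I * ((a * n₁ * n₂ : ℝ) : ℂ)))
      = ((∫ n₁ in (-(N₁/2))..(N₁/2), N₂ * mySinc (a * N₂ / 2 * n₁) : ℝ) : ℂ) := by
    rw [← intervalIntegral.integral_ofReal]
    exact intervalIntegral.integral_congr fun x _ => inner_integral_eq a N₂ ha hN₂' x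
  have step2 : (∫ n₁ in (-(N₁/2))..(N₁/2), N₂ * mySinc (a * N₂ / 2 * n₁) : ℝ)
      = N₂ * ((a * N₂ / 2)⁻¹ * (2 * Si (a * N₁ * N₂ / 4))) := by
    rw [intervalIntegral.integral_const_mul, intervalIntegral.integral_comp_mul_left _ hk]
    have e1 : a * N₂ / 2 * -(N₁ / 2) = -(a * N₁ * N₂ / 4) := by ring
    have e2 : a * N₂ / 2 * (N₁ / 2) = a * N₁ * N₂ / 4 := by ring
    rw [e1, e2, smul_eq_mul, integral_mySinc_symm]
  rw [step1, step2, Complex.norm_real, Real.norm_eq_abs]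
  rw [show N₂ * ((a * N₂ / 2)⁻¹ * (2 * Si (a * N₁ * N₂ / 4)))
      = (4 / a) * Si (a * N₁ * N₂ / 4) by field_simp; ring]
  rw [show |Si (a * N₁ * N₂ / 4) / (a * N₁ * N₂ / 4)|
      = |(4 / a * Si (a * N₁ * N₂ / 4)) / (N₁ * N₂)| by
    congr 1
    field_simp]
  rw [abs_div, abs_of_pos (mul_pos hN₁ hN₂)]
  ring
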